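/- Let A be an m × 2 integer matrix, not identically zero, A' the (m+1) × 2 matrix obtained from A by appending the row (1, 0), and n ≥ 1. Then lcmd(A' ⊗ D(K_n)) = lcmd(A ⊗ D(K_n)). -/

import Mathlib

open Matrix Kronecker

/-- Edges of the complete graph `K_n`. -/
def CompEdge (n : ℕ) := {e : Fin n × Fin n // e.1 < e.2}

instance (n : ℕ) : Fintype (CompEdge n) := by unfold CompEdge; infer_instance
instance (n : ℕ) : DecidableEq (CompEdge n) := by unfold CompEdge; infer_instance

/-- Incidence matrix of the complete graph `K_n`. -/
def incK (n : ℕ) : Matrix (Fin n) (CompEdge n) ℤ :=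
  fun v e => if v = e.1.1 then 1 else if v = e.1.2 then -1 else 0

/-- lcmd: lcm of the absolute values of all nonzero subdeterminants. -/
def lcmd {α β : Type*} [Fintype α] [DecidableEq α] [Fintype β] [DecidableEq β]
    (M : Matrix α β ℤ) : ℕ :=
  (((Finset.univ : Finset (Σ k : Fin (Fintype.card α + 1), (Fin k.1 → α) × (Fin k.1 → β))).image
    (fun x => ((M.submatrix x.2.1 x.2.2).det).natAbs)).erase 0).lcm id


def genB (n : ℕ) (u v w : Fin n) : ℤ := (if w = u then 1 else 0) - (if w = v then 1 else 0)

lemma genB_self (n : ℕ) (u w : Fin n) : genB n u u w = 0 := by simp [genB]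

lemma genB_swap (n : ℕ) (u v w : Fin n) : genB n u v w = - genB n v u w := by
  unfold genB; ring

lemma genB_ne (n : ℕ) {u v w : Fin n} (h : genB n u v w ≠ 0) : u ≠ v ∧ (w = u ∨ w = v) := by
  unfold genB at h
  split_ifs at h with h1 h2 h3 <;>
    [exact ⟨fun hh => h (by rw [hh] at h1; simp_all), Or.inl h1⟩;
     exact ⟨fun hh => h (by simp_all), Or.inl h1⟩;
     exact ⟨fun hh => h (by simp_all), Or.inr h3⟩;
     exact absurd rfl h]

lemma genB_sq (n : ℕ) {u₀ v₀ w₀ : Fin n} (h : w₀ = u₀ ∨ w₀ = v₀) (hne : u₀ ≠ v₀) :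
    genB n u₀ v₀ w₀ * genB n u₀ v₀ w₀ = 1 := by
  rcases h with rfl | rfl <;> simp [genB, hne, Ne.symm hne]

lemma genB_pivot (n : ℕ) (u₀ v₀ w₀ : Fin n) (h : w₀ = u₀ ∨ w₀ = v₀) (hne : u₀ ≠ v₀)
    (u v w : Fin n) :
    genB n u v w - genB n u₀ v₀ w₀ * (genB n u₀ v₀ w * genB n u v w₀) =
      genB n (if u = w₀ then (if w₀ = u₀ then v₀ else u₀) else u)
             (if v = w₀ then (if w₀ = u₀ then v₀ else u₀) else v) w := by
  rcases h with rfl | rfl <;>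
    by_cases h1 : u = w₀ <;> by_cases h2 : v = w₀ <;>
      first
      | (subst h1; subst h2
         simp only [if_pos rfl, genB, hne, Ne.symm hne]
         split_ifs <;> simp_all)
      | (subst h1
         simp only [if_pos rfl, if_neg h2, genB, hne, Ne.symm hne]
         split_ifs <;> simp_all)
      | (subst h2
         simp only [if_pos rfl, if_neg h1, genB, hne, Ne.symm hne]
         split_ifs <;> simp_all)
      | (simp only [if_neg h1, if_neg h2, genB, hne, Ne.symm hne]
         split_ifs <;> simp_all)


lemma det_pivot {k : ℕ} (M : Matrix (Fin (k+1)) (Fin (k+1)) ℤ) (i₀ j₀ : Fin (k+1))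
    (hε : M i₀ j₀ * M i₀ j₀ = 1) :
    ∃ (ri : Fin k → Fin (k+1)) (cj : Fin k → Fin (k+1)),
      M.det.natAbs =
        (Matrix.of fun i j : Fin k =>
          M (ri i) (cj j) - M i₀ j₀ * (M (ri i) j₀ * M i₀ (cj j))).det.natAbs := by
  classical
  set ε := M i₀ j₀ with hepsdef
  -- row elimination
  set d : Fin (k+1) → ℤ := fun i => if i = i₀ then 0 else -(ε * M i j₀) with hd
  set N : Matrix (Fin (k+1)) (Fin (k+1)) ℤ :=
    Matrix.of (fun i j => M i j + d i * M i₀ j) with hN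
  have hdetN : N.det = M.det := by
    apply Matrix.det_eq_of_forall_row_eq_smul_add_const d i₀ (by simp [hd])
    intro i j; simp [hN]
  have hNrow0 : ∀ i, i ≠ i₀ → N i j₀ = 0 := by
    intro i hi
    have : N i j₀ = M i j₀ * (1 - ε * ε) := by simp [hN, hd, hi]; ring
    rw [this, hε]; ring
  have hNi₀ : ∀ j, N i₀ j = M i₀ j := by intro j; simp [hN, hd]
  -- permute pivot to (0,0)
  set σ : Equiv.Perm (Fin (k+1)) := Equiv.swap 0 i₀ with hσ
  set τ : Equiv.Perm (Fin (k+1)) := Equiv.swap 0 j₀ with hτ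
  set P : Matrix (Fin (k+1)) (Fin (k+1)) ℤ := N.submatrix σ τ with hP
  have hdetP : P.det.natAbs = N.det.natAbs := by
    have h1 : P = (N.submatrix σ id).submatrix id τ := by
      ext i j; simp [hP]
    rw [h1, Matrix.det_permute' τ, Matrix.det_permute σ]
    simp [Int.natAbs_mul]
  -- expand along first column
  have hPcol : ∀ i : Fin (k+1), i ≠ 0 → P i 0 = 0 := by
    intro i hi
    have : σ i ≠ i₀ := by
      intro hc
      have : i = σ⁻¹ i₀ := by rw [← hc]; simp
      simp [hσ, Equiv.swap_inv, Equiv.swap_apply_right] at this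
      exact hi this
    simpa [hP, hτ, Equiv.swap_apply_left] using hNrow0 (σ i) this
  have hP00 : P 0 0 = ε := by
    simp [hP, hσ, hτ, Equiv.swap_apply_left, hNi₀]
    exact hepsdef.symm
  have hexp : P.det = ε * (P.submatrix Fin.succ Fin.succ).det := by
    rw [Matrix.det_succ_column_zero]
    rw [Finset.sum_eq_single 0]
    · rw [hP00]; simp [Fin.succAbove_zero]
    · intro i _ hi; rw [hPcol i hi]; ring
    · intro h; simp at h
  refine ⟨fun i => σ i.succ, fun j => τ j.succ, ?_⟩
  have hQ : (P.submatrix Fin.succ Fin.succ) =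
      Matrix.of (fun i j : Fin k =>
        M (σ i.succ) (τ j.succ) - ε * (M (σ i.succ) j₀ * M i₀ (τ j.succ))) := by
    ext i j
    have hrow : σ i.succ ≠ i₀ := by
      intro hc
      have : i.succ = σ⁻¹ i₀ := by rw [← hc]; simp
      simp [hσ, Equiv.swap_inv, Equiv.swap_apply_right] at this
    simp [hP, hN, hd, hrow]
    ring
  rw [← hdetN, ← hdetP, hexp, hQ, Int.natAbs_mul]
  have : ε.natAbs = 1 := by
    have h2 := congrArg Int.natAbs hε
    rw [Int.natAbs_mul] at h2
    simp at h2
    omega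
  rw [this, one_mul]


def GM {m n : ℕ} (A : Matrix (Fin m) (Fin 2) ℤ) {k : ℕ}
    (ρ : Fin k → Fin m × Fin n) (c : Fin k → Fin 2 × Fin n × Fin n) :
    Matrix (Fin k) (Fin k) ℤ :=
  Matrix.of fun i j => A (ρ i).1 (c j).1 * genB n (c j).2.1 (c j).2.2 (ρ i).2






lemma fin2_eq_one {x : Fin 2} (h : x ≠ 0) : x = 1 := by fin_cases x <;> simp_all

lemma main_induction {m n : ℕ} (A : Matrix (Fin m) (Fin 2) ℤ)
    (A' : Matrix (Fin (m+1)) (Fin 2) ℤ)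
    (hA'c : ∀ (i : Fin m) (j : Fin 2), A' i.castSucc j = A i j)
    (hlast0 : A' (Fin.last m) 0 = 1) (hlast1 : A' (Fin.last m) 1 = 0) :
    ∀ (k : ℕ) (ρ : Fin k → Fin (m+1) × Fin n) (c : Fin k → Fin 2 × Fin n × Fin n),
      (GM A' ρ c).det = 0 ∨
      ∃ (k' : ℕ) (ρ' : Fin k' → Fin m × Fin n) (c' : Fin k' → Fin 2 × Fin n × Fin n),
        (GM A' ρ c).det.natAbs = (GM A ρ' c').det.natAbs := by
  classical
  intro k
  induction k with
  | zero =>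
    intro ρ c
    right
    exact ⟨0, Fin.elim0, Fin.elim0, rfl⟩
  | succ k ih =>
    intro ρ c
    by_cases hnew : ∀ i, (ρ i).1 ≠ Fin.last m
    · right
      refine ⟨k+1, fun i => ⟨((ρ i).1).castPred (hnew i), (ρ i).2⟩, c, ?_⟩
      congr 1
      apply congrArg
      ext i j
      simp only [GM, Matrix.of_apply]
      rw [← hA'c (((ρ i).1).castPred (hnew i)) (c j).1, Fin.castSucc_castPred]
    · push_neg at hnew
      obtain ⟨i₀, hi₀⟩ := hnew
      set M := GM A' ρ c with hM
      by_cases hz : M.det = 0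
      · exact Or.inl hz
      -- find pivot column
      have hrow : ¬ ∀ j, M i₀ j = 0 := by
        intro hc; exact hz (Matrix.det_eq_zero_of_row_eq_zero i₀ hc)
      push_neg at hrow
      obtain ⟨j₀, hj₀⟩ := hrow
      have hMi₀ : ∀ j, M i₀ j = A' (Fin.last m) (c j).1 * genB n (c j).2.1 (c j).2.2 (ρ i₀).2 := by
        intro j; simp [hM, GM, hi₀]
      have hcj₀ : (c j₀).1 = 0 := by
        by_contra hc
        have h1 : (c j₀).1 = 1 := fin2_eq_one hc
        rw [hMi₀ j₀, h1, hlast1, zero_mul] at hj₀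
        exact hj₀ rfl
      have hgne : genB n (c j₀).2.1 (c j₀).2.2 (ρ i₀).2 ≠ 0 := by
        intro hc
        rw [hMi₀ j₀, hc, mul_zero] at hj₀
        exact hj₀ rfl
      obtain ⟨hne, hw⟩ := genB_ne n hgne
      have hε : M i₀ j₀ * M i₀ j₀ = 1 := by
        rw [hMi₀ j₀, hcj₀, hlast0, one_mul]
        exact genB_sq n hw hne
      obtain ⟨ri, cj, hpiv⟩ := det_pivot M i₀ j₀ hε
      -- rerouting function
      set u₀ := (c j₀).2.1
      set v₀ := (c j₀).2.2
      set w₀ := (ρ i₀).2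
      set r : Fin n → Fin n := fun x => if x = w₀ then (if w₀ = u₀ then v₀ else u₀) else x with hr
      set ρ₂ : Fin k → Fin (m+1) × Fin n := fun i => ρ (ri i) with hρ₂
      set c₂ : Fin k → Fin 2 × Fin n × Fin n := fun j =>
        ((c (cj j)).1,
          if (c (cj j)).1 = 0 then (r (c (cj j)).2.1, r (c (cj j)).2.2)
          else ((c (cj j)).2.1, (c (cj j)).2.2)) with hc₂
      have hε' : M i₀ j₀ = genB n u₀ v₀ w₀ := by
        rw [hMi₀ j₀, hcj₀, hlast0, one_mul]
      have hQ : (Matrix.of fun i j : Fin k =>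
          M (ri i) (cj j) - M i₀ j₀ * (M (ri i) j₀ * M i₀ (cj j))) = GM A' ρ₂ c₂ := by
        ext i j
        simp only [Matrix.of_apply]
        have hMr : M (ri i) (cj j) =
            A' (ρ (ri i)).1 (c (cj j)).1 * genB n (c (cj j)).2.1 (c (cj j)).2.2 (ρ (ri i)).2 := by
          simp [hM, GM]
        have hMr₀ : M (ri i) j₀ =
            A' (ρ (ri i)).1 0 * genB n u₀ v₀ (ρ (ri i)).2 := by
          simp [hM, GM, hcj₀]
          exact Or.inl rfl
        by_cases hq : (c (cj j)).1 = 0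
        · have hA2 : M i₀ (cj j) = genB n (c (cj j)).2.1 (c (cj j)).2.2 w₀ := by
            rw [hMi₀ (cj j), hq, hlast0, one_mul]
          have hRHS : GM A' ρ₂ c₂ i j =
              A' (ρ (ri i)).1 0 * genB n (r (c (cj j)).2.1) (r (c (cj j)).2.2) (ρ (ri i)).2 := by
            simp only [GM, Matrix.of_apply, hρ₂, hc₂, hq, if_pos]
          rw [hMr, hMr₀, hε', hA2, hq, hRHS]
          have hgp := genB_pivot n u₀ v₀ w₀ hw hne (c (cj j)).2.1 (c (cj j)).2.2 (ρ (ri i)).2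
          simp only [hr]
          linear_combination (A' (ρ (ri i)).1 0) * hgp
        · have hq1 : (c (cj j)).1 = 1 := fin2_eq_one hq
          have hA2 : M i₀ (cj j) = 0 := by
            rw [hMi₀ (cj j), hq1, hlast1, zero_mul]
          have hRHS : GM A' ρ₂ c₂ i j =
              A' (ρ (ri i)).1 (c (cj j)).1 * genB n (c (cj j)).2.1 (c (cj j)).2.2 (ρ (ri i)).2 := by
            simp only [GM, Matrix.of_apply, hρ₂, hc₂, hq, if_neg, if_false]
          rw [hMr, hA2, hRHS]
          ring
      rw [hQ] at hpiv
      rcases ih ρ₂ c₂ with h0 | ⟨k', ρ', c', heq⟩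
      · left
        rw [← Int.natAbs_eq_zero]
        rw [hpiv, h0]
        rfl
      · right
        exact ⟨k', ρ', c', by rw [hpiv, heq]⟩

def mkEdge {n : ℕ} (u v : Fin n) (h : u < v) : CompEdge n := ⟨(u, v), h⟩

lemma mkEdge_fst {n : ℕ} (u v : Fin n) (h : u < v) : (mkEdge u v h).1.1 = u := rfl
lemma mkEdge_snd {n : ℕ} (u v : Fin n) (h : u < v) : (mkEdge u v h).1.2 = v := rfl

lemma compEdge_lt {n : ℕ} (e : CompEdge n) : e.1.1 < e.1.2 := e.2

lemma incK_genB (n : ℕ) (w : Fin n) (e : CompEdge n) :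
    incK n w e = genB n e.1.1 e.1.2 w := by
  have huv : e.1.1 ≠ e.1.2 := ne_of_lt (compEdge_lt e)
  unfold incK genB
  split_ifs <;> simp_all


/-- appending the row `(1, 0)` to a nonzero `m × 2` integer matrix `A` does
not change `lcmd(A ⊗ D(K_n))`. -/
theorem lcmd_kronecker_append_identity_row (m n : ℕ) (hn : 1 ≤ n)
    (A : Matrix (Fin m) (Fin 2) ℤ) (hA : A ≠ 0)
    (A' : Matrix (Fin (m + 1)) (Fin 2) ℤ)
    (hA' : A' = Matrix.of (Fin.snoc (fun i => A i) ![1, 0])) :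
    lcmd (A' ⊗ₖ incK n) = lcmd (A ⊗ₖ incK n) := by
  classical
  have hA'c : ∀ (i : Fin m) (j : Fin 2), A' i.castSucc j = A i j := by
    intro i j; rw [hA']
    show (Fin.snoc (fun i => A i) ![1, 0] : (_ : Fin (m+1)) → Fin 2 → ℤ) i.castSucc j = A i j
    rw [Fin.snoc_castSucc]
  have hlastf : A' (Fin.last m) = ![1, 0] := by
    rw [hA']
    show (Fin.snoc (fun i => A i) ![1, 0] : (_ : Fin (m+1)) → Fin 2 → ℤ) (Fin.last m) = ![1, 0]
    rw [Fin.snoc_last]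
  have hlast0 : A' (Fin.last m) 0 = 1 := by rw [hlastf]; rfl
  have hlast1 : A' (Fin.last m) 1 = 0 := by rw [hlastf]; rfl
  unfold lcmd
  apply Nat.dvd_antisymm
  · -- every nonzero minor of A' ⊗ incK divides the A-side lcm
    apply Finset.lcm_dvd
    intro b hb
    rw [Finset.mem_erase, Finset.mem_image] at hb
    obtain ⟨hb0, x, -, hx⟩ := hb
    obtain ⟨⟨K, hK⟩, rc, cc⟩ := x
    simp only at hx
    -- rewrite as a generalized minor
    set ct : Fin K → Fin 2 × Fin n × Fin n :=
      fun j => ((cc j).1, ((cc j).2.1.1, (cc j).2.1.2)) with hct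
    have hsub : ((A' ⊗ₖ incK n).submatrix rc cc) = GM A' rc ct := by
      ext i j
      simp only [Matrix.submatrix_apply, Matrix.kroneckerMap_apply, GM, Matrix.of_apply, hct,
        incK_genB]
    rw [hsub] at hx
    rcases main_induction A A' hA'c hlast0 hlast1 K rc ct with h0 | ⟨k', ρ', c', heq⟩
    · exfalso; apply hb0; rw [← hx, h0]; rfl
    · rw [heq] at hx
      have hdne : (GM A ρ' c').det ≠ 0 := by
        intro h0; apply hb0; rw [← hx, h0]; rfl
      -- no degenerate columns
      have hcols : ∀ j, (c' j).2.1 ≠ (c' j).2.2 := by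
        intro j hj
        apply hdne
        apply Matrix.det_eq_zero_of_column_eq_zero j
        intro i
        simp [GM, ← hj, genB_self]
      -- convert generalized columns to honest edges with signs
      set ecol : Fin k' → Fin 2 × CompEdge n := fun j =>
        ((c' j).1,
          if h : (c' j).2.1 < (c' j).2.2 then mkEdge _ _ h
          else mkEdge _ _ (lt_of_le_of_ne (not_lt.mp h) (Ne.symm (hcols j)))) with hecol
      set s : Fin k' → ℤ := fun j => if (c' j).2.1 < (c' j).2.2 then 1 else -1 with hs
      have hfac : GM A ρ' c' =
          Matrix.of (fun i j => s j * ((A ⊗ₖ incK n).submatrix ρ' ecol) i j) := by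
        ext i j
        simp only [Matrix.of_apply, GM, Matrix.submatrix_apply, Matrix.kroneckerMap_apply,
          hecol, hs]
        by_cases h : (c' j).2.1 < (c' j).2.2
        · rw [if_pos h, dif_pos h, one_mul, incK_genB, mkEdge_fst, mkEdge_snd]
        · rw [if_neg h, dif_neg h, incK_genB, mkEdge_fst, mkEdge_snd,
            genB_swap n (c' j).2.1 (c' j).2.2 (ρ' i).2]
          ring
      have hsval : ∀ j, s j = 1 ∨ s j = -1 := by
        intro j; simp only [hs]; split_ifs <;> simp
      have hprod : (∏ j, s j) = 1 ∨ (∏ j, s j) = -1 := by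
        apply Finset.prod_induction s (fun x => x = 1 ∨ x = -1)
        · rintro a b (rfl | rfl) (rfl | rfl) <;> norm_num
        · exact Or.inl rfl
        · exact fun x _ => hsval x
      have hnab : (GM A ρ' c').det.natAbs =
          ((A ⊗ₖ incK n).submatrix ρ' ecol).det.natAbs := by
        rw [hfac, Matrix.det_mul_row, Int.natAbs_mul]
        rcases hprod with h | h <;> rw [h] <;> simp
      rw [hnab] at hx
      -- injectivity of the row selection gives the dimension bound
      have hinj : Function.Injective ρ' := by
        intro a b hab
        by_contra hne'
        apply hdne
        apply Matrix.det_zero_of_row_eq hne'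
        funext j
        simp [GM, hab]
      have hk'lt : k' < Fintype.card (Fin m × Fin n) + 1 := by
        have h1 := Fintype.card_le_of_injective ρ' hinj
        simp only [Fintype.card_fin] at h1
        omega
      apply Finset.dvd_lcm
      rw [Finset.mem_erase, Finset.mem_image]
      exact ⟨hb0, ⟨⟨⟨k', hk'lt⟩, ρ', ecol⟩, Finset.mem_univ _, hx⟩⟩
  · -- every nonzero minor of A ⊗ incK is a minor of A' ⊗ incK
    apply Finset.lcm_dvd
    intro b hb
    rw [Finset.mem_erase, Finset.mem_image] at hb
    obtain ⟨hb0, x, -, hx⟩ := hb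
    obtain ⟨⟨K, hK⟩, rc, cc⟩ := x
    simp only at hx
    have hKlt : K < Fintype.card (Fin (m + 1) × Fin n) + 1 := by
      simp only [Fintype.card_prod, Fintype.card_fin] at hK ⊢
      nlinarith
    have hsub : ((A' ⊗ₖ incK n).submatrix (fun t => ((rc t).1.castSucc, (rc t).2)) cc) =
        ((A ⊗ₖ incK n).submatrix rc cc) := by
      ext i j
      simp only [Matrix.submatrix_apply, Matrix.kroneckerMap_apply]
      rw [hA'c]
    apply Finset.dvd_lcm
    rw [Finset.mem_erase, Finset.mem_image]
    refine ⟨hb0, ⟨⟨⟨K, hKlt⟩, fun t => ((rc t).1.castSucc, (rc t).2), cc⟩, Finset.mem_univ _, ?_⟩⟩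
    simp only
    rw [hsub, hx]
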